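/- Let S be a semigroup generated by finitely many Hénon maps H_1,...,H_{n0}. Then there exists R_S > 0 such that for every R > R_S and every h ∈ S, the closure of h(V_R^+) is contained in V_R^+ and the closure of h^{-1}(V_R^-) is contained in V_R^-. Moreover, for any sequence h_k ∈ G_k (elements of word length k), there is a sequence R_k → ∞ with h_k(V_R^+) ∩ V_{R_k} = ∅ and h_k^{-1}(V_R^-) ∩ V_{R_k} = ∅. -/

import Mathlib

open Filter Metric Set Bornology

noncomputable section

/-- A generalized Hénon map of ℂ²: `H (x,y) = (y, p(y) - a x)` with `a ≠ 0` and
`deg p = d ≥ 2`. -/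
def IsGenHenonDeg (h : ℂ × ℂ → ℂ × ℂ) (d : ℕ) : Prop :=
  ∃ (a : ℂ) (p : Polynomial ℂ), a ≠ 0 ∧ 2 ≤ p.natDegree ∧ p.natDegree = d ∧
    ∀ x y : ℂ, h (x, y) = (y, p.eval y - a * x)

/-- A Hénon map of degree `d`: a finite (nonempty) composition of generalized
Hénon maps, `d` being the product of the degrees of the factors. -/
def IsHenonDeg (h : ℂ × ℂ → ℂ × ℂ) (d : ℕ) : Prop :=
  ∃ l : List ((ℂ × ℂ → ℂ × ℂ) × ℕ), l ≠ [] ∧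
    (∀ gd ∈ l, IsGenHenonDeg gd.1 gd.2) ∧
    h = (l.map Prod.fst).foldr (· ∘ ·) id ∧ d = (l.map Prod.snd).prod

def IsHenon (h : ℂ × ℂ → ℂ × ℂ) : Prop := ∃ d, IsHenonDeg h d

/-- The polydisk `V_R = {max(|x|,|y|) ≤ R}`. -/
def VR (R : ℝ) : Set (ℂ × ℂ) := {z | max ‖z.1‖ ‖z.2‖ ≤ R}

/-- `V_R^+ = {|y| ≥ max(|x|, R)}`. -/
def VRp (R : ℝ) : Set (ℂ × ℂ) := {z | max ‖z.1‖ R ≤ ‖z.2‖}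

/-- `V_R^- = {|x| ≥ max(|y|, R)}`. -/
def VRm (R : ℝ) : Set (ℂ × ℂ) := {z | max ‖z.2‖ R ≤ ‖z.1‖}

/-- The element of the semigroup given by the word `w`:
`H_{w 0} ∘ H_{w 1} ∘ ⋯ ∘ H_{w (k-1)}`. -/
def wordProd {n : ℕ} (H : Fin n → Equiv.Perm (ℂ × ℂ)) {k : ℕ}
    (w : Fin k → Fin n) : Equiv.Perm (ℂ × ℂ) :=
  (List.ofFn fun j => H (w j)).prod


open Polynomial

lemma poly_growth (p : Polynomial ℂ) (hd : 2 ≤ p.natDegree) (C : ℝ) (hC : 0 ≤ C) :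
    ∃ R₀ ≥ (1:ℝ), ∀ y : ℂ, R₀ ≤ ‖y‖ → C * ‖y‖ ≤ ‖p.eval y‖ := by
  have hp0 : p ≠ 0 := fun h => by simp [h] at hd
  set d := p.natDegree with hdd
  have ha : p.leadingCoeff ≠ 0 := leadingCoeff_ne_zero.mpr hp0
  set a := p.leadingCoeff with hadef
  set B := ∑ i ∈ Finset.range d, ‖p.coeff i‖ with hBdef
  have hB : 0 ≤ B := Finset.sum_nonneg fun _ _ => norm_nonneg _
  have hapos : 0 < ‖a‖ := norm_pos_iff.mpr ha
  refine ⟨max 1 ((B + C)/‖a‖), le_max_left _ _, fun y hy => ?_⟩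
  have hy1 : 1 ≤ ‖y‖ := le_trans (le_max_left _ _) hy
  have hy0 : 0 ≤ ‖y‖ := norm_nonneg _
  have hy3 : B + C ≤ ‖a‖ * ‖y‖ := by
    have := (div_le_iff₀ hapos).mp (le_trans (le_max_right _ _) hy)
    linarith
  have heval : p.eval y = (∑ i ∈ Finset.range d, p.coeff i * y^i) + a * y^d := by
    rw [eval_eq_sum_range, Finset.sum_range_succ, coeff_natDegree]
  set s := ∑ i ∈ Finset.range d, p.coeff i * y^i with hsdef
  have hsum : ‖s‖ ≤ B * ‖y‖^(d-1) := by
    calc ‖s‖ ≤ ∑ i ∈ Finset.range d, ‖p.coeff i * y^i‖ := norm_sum_le _ _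
    _ ≤ ∑ i ∈ Finset.range d, ‖p.coeff i‖ * ‖y‖^(d-1) := by
        apply Finset.sum_le_sum; intro i hi
        rw [norm_mul, norm_pow]
        have hid : i ≤ d - 1 := by have := Finset.mem_range.mp hi; omega
        exact mul_le_mul_of_nonneg_left (pow_le_pow_right₀ hy1 hid) (norm_nonneg _)
    _ = B * ‖y‖^(d-1) := by rw [hBdef, Finset.sum_mul]
  have hyd : ‖y‖^d = ‖y‖^(d-1) * ‖y‖ := by
    rw [← pow_succ]; congr 1; omega
  have hpow : ‖y‖ ≤ ‖y‖^(d-1) := by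
    calc ‖y‖ = ‖y‖^1 := (pow_one _).symm
    _ ≤ ‖y‖^(d-1) := pow_le_pow_right₀ hy1 (by omega)
  have key : C * ‖y‖ ≤ ‖a‖*‖y‖^d - B*‖y‖^(d-1) := by
    rw [hyd]
    have h1 : C ≤ ‖a‖*‖y‖ - B := by linarith
    calc C * ‖y‖ ≤ (‖a‖*‖y‖ - B) * ‖y‖^(d-1) :=
          mul_le_mul h1 hpow hy0 (by linarith)
    _ = ‖a‖*(‖y‖^(d-1)*‖y‖) - B*‖y‖^(d-1) := by ring
  have htri : ‖a*y^d‖ - ‖s‖ ≤ ‖s + a*y^d‖ := by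
    have h2 := norm_sub_le (s + a*y^d) s
    simp only [add_sub_cancel_left] at h2
    linarith
  have hnorm : ‖a*y^d‖ = ‖a‖ * ‖y‖^d := by rw [norm_mul, norm_pow]
  rw [heval]
  linarith

lemma gen_henon_est {h : ℂ × ℂ → ℂ × ℂ} {d : ℕ} (hh : IsGenHenonDeg h d) :
    ∃ g : ℂ × ℂ → ℂ × ℂ, (∀ z, g (h z) = z) ∧ (∀ z, h (g z) = z) ∧
    ∃ R₀ ≥ (1:ℝ), ∀ R, R₀ ≤ R →
      (∀ z ∈ VRp R, h z ∈ VRp R ∧ 2*‖z.2‖ ≤ ‖(h z).2‖) ∧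
      (∀ z ∈ VRm R, g z ∈ VRm R ∧ 2*‖z.1‖ ≤ ‖(g z).1‖) := by
  obtain ⟨a, p, ha, hdeg2, -, hform⟩ := hh
  have hapos : 0 < ‖a‖ := norm_pos_iff.mpr ha
  set C : ℝ := 2 + ‖a‖ + 2*‖a‖ with hCdef
  have hC : 0 ≤ C := by positivity
  obtain ⟨R₀, hR₀1, hR₀⟩ := poly_growth p hdeg2 C hC
  refine ⟨fun z => ((p.eval z.1 - z.2)/a, z.1), ?_, ?_, R₀, hR₀1, ?_⟩
  · intro z
    rw [show h z = h (z.1, z.2) from rfl, hform z.1 z.2]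
    simp only
    field_simp
    ext <;> simp [ha]
  · intro z
    simp only
    rw [hform _ _]
    field_simp
    ext <;> simp [ha]
  · intro R hR
    constructor
    · rintro z hz
      have hz' : max ‖z.1‖ R ≤ ‖z.2‖ := hz
      have hR1 : 1 ≤ R := le_trans hR₀1 hR
      have h2R : R ≤ ‖z.2‖ := le_trans (le_max_right _ _) hz'
      have h1 : ‖z.1‖ ≤ ‖z.2‖ := le_trans (le_max_left _ _) hz'
      have hp : C * ‖z.2‖ ≤ ‖p.eval z.2‖ := hR₀ _ (le_trans hR h2R)
      have hformz : h z = (z.2, p.eval z.2 - a * z.1) := by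
        rw [show h z = h (z.1, z.2) from rfl, hform z.1 z.2]
      have hax : ‖a * z.1‖ ≤ ‖a‖ * ‖z.2‖ := by
        rw [norm_mul]; exact mul_le_mul_of_nonneg_left h1 (norm_nonneg _)
      have hlow : 2*‖z.2‖ ≤ ‖p.eval z.2 - a * z.1‖ := by
        have := norm_sub_norm_le (p.eval z.2) (a * z.1)
        have h3 : ‖p.eval z.2‖ - ‖a*z.1‖ ≤ ‖p.eval z.2 - a*z.1‖ := norm_sub_norm_le _ _
        nlinarith [norm_nonneg (a*z.1), norm_nonneg z.2]
      refine ⟨?_, by rw [hformz]; exact hlow⟩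
      show max ‖(h z).1‖ R ≤ ‖(h z).2‖
      rw [hformz]
      simp only [max_le_iff]
      constructor
      · linarith [norm_nonneg z.2]
      · linarith [norm_nonneg z.2]
    · rintro z hz
      have hz' : max ‖z.2‖ R ≤ ‖z.1‖ := hz
      have hR1 : 1 ≤ R := le_trans hR₀1 hR
      have h2R : R ≤ ‖z.1‖ := le_trans (le_max_right _ _) hz'
      have h1 : ‖z.2‖ ≤ ‖z.1‖ := le_trans (le_max_left _ _) hz'
      have hp : C * ‖z.1‖ ≤ ‖p.eval z.1‖ := hR₀ _ (le_trans hR h2R)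
      have hlow : 2*‖a‖*‖z.1‖ ≤ ‖p.eval z.1 - z.2‖ := by
        have h3 : ‖p.eval z.1‖ - ‖z.2‖ ≤ ‖p.eval z.1 - z.2‖ := norm_sub_norm_le _ _
        nlinarith [norm_nonneg z.1]
      have hdiv : 2*‖z.1‖ ≤ ‖(p.eval z.1 - z.2)/a‖ := by
        rw [norm_div, le_div_iff₀ hapos]
        nlinarith
      refine ⟨?_, hdiv⟩
      show max ‖z.1‖ R ≤ ‖(p.eval z.1 - z.2)/a‖
      simp only [max_le_iff]
      constructor
      · linarith [norm_nonneg z.1]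
      · linarith [norm_nonneg z.1]

lemma list_comp_est (l : List ((ℂ × ℂ → ℂ × ℂ) × ℕ))
    (hl : ∀ gd ∈ l, IsGenHenonDeg gd.1 gd.2) :
    ∃ g : ℂ × ℂ → ℂ × ℂ,
      (∀ z, g ((l.map Prod.fst).foldr (· ∘ ·) id z) = z) ∧
      (∀ z, (l.map Prod.fst).foldr (· ∘ ·) id (g z) = z) ∧
      ∃ R₀ ≥ (1:ℝ), ∀ R, R₀ ≤ R →
        (∀ z ∈ VRp R, (l.map Prod.fst).foldr (· ∘ ·) id z ∈ VRp R ∧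
          2^l.length*‖z.2‖ ≤ ‖((l.map Prod.fst).foldr (· ∘ ·) id z).2‖) ∧
        (∀ z ∈ VRm R, g z ∈ VRm R ∧ 2^l.length*‖z.1‖ ≤ ‖(g z).1‖) := by
  induction l with
  | nil =>
    refine ⟨id, fun z => rfl, fun z => rfl, 1, le_refl _, fun R hR => ⟨?_, ?_⟩⟩ <;>
      · intro z hz
        simpa using hz
  | cons gd t ih =>
    obtain ⟨g₂, hg₂l, hg₂r, R₂, hR₂1, hR₂⟩ := ih (fun x hx => hl x (List.mem_cons_of_mem _ hx))
    obtain ⟨g₁, hg₁l, hg₁r, R₁, hR₁1, hR₁⟩ := gen_henon_est (hl gd List.mem_cons_self)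
    set F₂ := (t.map Prod.fst).foldr (· ∘ ·) id with hF₂
    have hfold : ((gd :: t).map Prod.fst).foldr (· ∘ ·) id = gd.1 ∘ F₂ := rfl
    refine ⟨g₂ ∘ g₁, ?_, ?_, max R₁ R₂, le_trans hR₁1 (le_max_left _ _), ?_⟩
    · intro z
      rw [hfold]
      simp only [Function.comp_apply, hg₁l, hg₂l]
    · intro z
      rw [hfold]
      simp only [Function.comp_apply, hg₂r, hg₁r]
    · intro R hR
      have hR1 : R₁ ≤ R := le_trans (le_max_left _ _) hR
      have hR2 : R₂ ≤ R := le_trans (le_max_right _ _) hR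
      constructor
      · intro z hz
        obtain ⟨hm2, he2⟩ := (hR₂ R hR2).1 z hz
        obtain ⟨hm1, he1⟩ := (hR₁ R hR1).1 (F₂ z) hm2
        rw [hfold]
        refine ⟨hm1, ?_⟩
        simp only [Function.comp_apply, List.length_cons]
        have h2 : (0:ℝ) ≤ 2^t.length * ‖z.2‖ := by positivity
        calc (2:ℝ)^(t.length+1) * ‖z.2‖ = 2 * (2^t.length * ‖z.2‖) := by ring
        _ ≤ 2 * ‖(F₂ z).2‖ := by linarith
        _ ≤ ‖(gd.1 (F₂ z)).2‖ := he1
      · intro z hz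
        obtain ⟨hm1, he1⟩ := (hR₁ R hR1).2 z hz
        obtain ⟨hm2, he2⟩ := (hR₂ R hR2).2 (g₁ z) hm1
        refine ⟨hm2, ?_⟩
        simp only [Function.comp_apply, List.length_cons]
        have h2 : (0:ℝ) ≤ 2^t.length := by positivity
        calc (2:ℝ)^(t.length+1) * ‖z.1‖ = 2^t.length * (2 * ‖z.1‖) := by ring
        _ ≤ 2^t.length * ‖(g₁ z).1‖ := by nlinarith
        _ ≤ ‖(g₂ (g₁ z)).1‖ := he2

lemma henon_perm_est {n : ℕ} (H : Fin n → Equiv.Perm (ℂ × ℂ)) (hH : ∀ i, IsHenon ⇑(H i))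
    (i : Fin n) :
    ∃ R₀ ≥ (1:ℝ), ∀ R, R₀ ≤ R →
      (∀ z ∈ VRp R, H i z ∈ VRp R ∧ 2*‖z.2‖ ≤ ‖(H i z).2‖) ∧
      (∀ z ∈ VRm R, (H i)⁻¹ z ∈ VRm R ∧ 2*‖z.1‖ ≤ ‖((H i)⁻¹ z).1‖) := by
  obtain ⟨d, l, hlne, hlgen, hfe, -⟩ := hH i
  obtain ⟨g, hgl, hgr, R₀, hR₀1, hR₀⟩ := list_comp_est l hlgen
  have hlen : 1 ≤ l.length := by
    cases l with
    | nil => exact absurd rfl hlne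
    | cons a t => simp
  have h2len : (2:ℝ) ≤ 2^l.length := by
    calc (2:ℝ) = 2^1 := (pow_one _).symm
    _ ≤ 2^l.length := pow_le_pow_right₀ one_le_two hlen
  have hinv : ∀ z, ⇑(H i)⁻¹ z = g z := by
    intro z
    have h1 : H i (g z) = z := by rw [hfe]; exact hgr z
    calc ⇑(H i)⁻¹ z = (H i)⁻¹ (H i (g z)) := by rw [h1]
    _ = g z := by simp
  refine ⟨R₀, hR₀1, fun R hR => ⟨?_, ?_⟩⟩
  · intro z hz
    obtain ⟨hm, he⟩ := (hR₀ R hR).1 z hz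
    rw [show ⇑(H i) z = (l.map Prod.fst).foldr (· ∘ ·) id z from by rw [hfe]]
    refine ⟨hm, ?_⟩
    have : (0:ℝ) ≤ ‖z.2‖ := norm_nonneg _
    nlinarith
  · intro z hz
    obtain ⟨hm, he⟩ := (hR₀ R hR).2 z hz
    rw [hinv z]
    refine ⟨hm, ?_⟩
    have : (0:ℝ) ≤ ‖z.1‖ := norm_nonneg _
    nlinarith

lemma perm_list_est (R : ℝ) (L : List (Equiv.Perm (ℂ × ℂ)))
    (hL : ∀ σ ∈ L,
      (∀ z ∈ VRp R, σ z ∈ VRp R ∧ 2*‖z.2‖ ≤ ‖(σ z).2‖) ∧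
      (∀ z ∈ VRm R, σ⁻¹ z ∈ VRm R ∧ 2*‖z.1‖ ≤ ‖(σ⁻¹ z).1‖)) :
    (∀ z ∈ VRp R, L.prod z ∈ VRp R ∧ 2^L.length*‖z.2‖ ≤ ‖(L.prod z).2‖) ∧
    (∀ z ∈ VRm R, L.prod⁻¹ z ∈ VRm R ∧ 2^L.length*‖z.1‖ ≤ ‖(L.prod⁻¹ z).1‖) := by
  induction L with
  | nil => constructor <;> · intro z hz; simpa using hz
  | cons σ t ih =>
    obtain ⟨ihp, ihm⟩ := ih (fun τ hτ => hL τ (List.mem_cons_of_mem _ hτ))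
    obtain ⟨hσp, hσm⟩ := hL σ List.mem_cons_self
    constructor
    · intro z hz
      obtain ⟨hm2, he2⟩ := ihp z hz
      obtain ⟨hm1, he1⟩ := hσp (t.prod z) hm2
      rw [List.prod_cons]
      refine ⟨hm1, ?_⟩
      rw [Equiv.Perm.mul_apply, List.length_cons]
      have h2 : (0:ℝ) ≤ 2^t.length * ‖z.2‖ := by positivity
      calc (2:ℝ)^(t.length+1) * ‖z.2‖ = 2 * (2^t.length * ‖z.2‖) := by ring
      _ ≤ 2 * ‖(t.prod z).2‖ := by linarith
      _ ≤ ‖(σ (t.prod z)).2‖ := he1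
    · intro z hz
      obtain ⟨hm1, he1⟩ := hσm z hz
      obtain ⟨hm2, he2⟩ := ihm (σ⁻¹ z) hm1
      rw [List.prod_cons, mul_inv_rev]
      refine ⟨hm2, ?_⟩
      rw [Equiv.Perm.mul_apply, List.length_cons]
      have h2 : (0:ℝ) ≤ 2^t.length := by positivity
      calc (2:ℝ)^(t.length+1) * ‖z.1‖ = 2^t.length * (2 * ‖z.1‖) := by ring
      _ ≤ 2^t.length * ‖(σ⁻¹ z).1‖ := by nlinarith
      _ ≤ ‖(t.prod⁻¹ (σ⁻¹ z)).1‖ := he2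

lemma isClosed_VRp (R : ℝ) : IsClosed (VRp R) :=
  isClosed_le (Continuous.max (continuous_fst.norm) continuous_const) (continuous_snd.norm)

lemma isClosed_VRm (R : ℝ) : IsClosed (VRm R) :=
  isClosed_le (Continuous.max (continuous_snd.norm) continuous_const) (continuous_fst.norm)

/-- filtration for a finitely generated Hénon semigroup: there is a
radius of filtration `R_S > 0` such that for every `R > R_S` and every `h` in the
semigroup, `closure (h(V_R^+)) ⊆ V_R^+` and `closure (h⁻¹(V_R^-)) ⊆ V_R^-`; and for
every sequence `h_k` of word length `k` there are radii `R_k → ∞` with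
`h_k(V_R^+) ∩ V_{R_k} = ∅` and `h_k⁻¹(V_R^-) ∩ V_{R_k} = ∅`. -/
theorem semigroup_filtration (n : ℕ) (hn : 0 < n)
    (H : Fin n → Equiv.Perm (ℂ × ℂ)) (hH : ∀ i, IsHenon ⇑(H i)) :
    ∃ RS > (0 : ℝ), ∀ R > RS,
      (∀ h ∈ Subsemigroup.closure (Set.range H),
        closure (⇑h '' VRp R) ⊆ VRp R ∧ closure (⇑h⁻¹ '' VRm R) ⊆ VRm R) ∧
      (∀ hseq : ℕ → Equiv.Perm (ℂ × ℂ),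
        (∀ k : ℕ, ∃ w : Fin (k + 1) → Fin n, hseq k = wordProd H w) →
        ∃ Rk : ℕ → ℝ, Tendsto Rk atTop atTop ∧
          ∀ k : ℕ, (⇑(hseq k) '' VRp R) ∩ VR (Rk k) = ∅ ∧
            (⇑(hseq k)⁻¹ '' VRm R) ∩ VR (Rk k) = ∅) := by
  choose r hr1 hr using henon_perm_est H hH
  set RS : ℝ := ∑ i, r i with hRS
  have hRSi : ∀ i, r i ≤ RS :=
    fun i => Finset.single_le_sum (f := r) (fun j _ => le_trans zero_le_one (hr1 j))
      (Finset.mem_univ i)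
  have hRSpos : 0 < RS := lt_of_lt_of_le one_pos (le_trans (hr1 ⟨0, hn⟩) (hRSi ⟨0, hn⟩))
  refine ⟨RS, hRSpos, fun R hR => ?_⟩
  have hRr : ∀ i, r i ≤ R := fun i => le_trans (hRSi i) (le_of_lt hR)
  have hRpos : 0 < R := lt_trans hRSpos hR
  -- generator property at radius R
  have hgen : ∀ i : Fin n,
      (∀ z ∈ VRp R, H i z ∈ VRp R ∧ 2*‖z.2‖ ≤ ‖(H i z).2‖) ∧
      (∀ z ∈ VRm R, (H i)⁻¹ z ∈ VRm R ∧ 2*‖z.1‖ ≤ ‖((H i)⁻¹ z).1‖) :=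
    fun i => hr i R (hRr i)
  constructor
  · -- semigroup part
    intro h hmem
    have key : (∀ z ∈ VRp R, h z ∈ VRp R) ∧ (∀ z ∈ VRm R, ⇑h⁻¹ z ∈ VRm R) := by
      induction hmem using Subsemigroup.closure_induction with
      | mem x hx =>
        obtain ⟨i, rfl⟩ := hx
        exact ⟨fun z hz => ((hgen i).1 z hz).1, fun z hz => ((hgen i).2 z hz).1⟩
      | mul x y hx hy px py =>
        refine ⟨fun z hz => ?_, fun z hz => ?_⟩
        · rw [Equiv.Perm.mul_apply]
          exact px.1 _ (py.1 z hz)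
        · rw [mul_inv_rev, Equiv.Perm.mul_apply]
          exact py.2 _ (px.2 z hz)
    constructor
    · exact closure_minimal (Set.image_subset_iff.mpr (fun z hz => key.1 z hz)) (isClosed_VRp R)
    · exact closure_minimal (Set.image_subset_iff.mpr (fun z hz => key.2 z hz)) (isClosed_VRm R)
  · -- sequence part
    intro hseq hword
    refine ⟨fun k => 2^k * R, ?_, fun k => ?_⟩
    · exact Tendsto.atTop_mul_const hRpos (tendsto_pow_atTop_atTop_of_one_lt one_lt_two)
    · obtain ⟨w, hw⟩ := hword k
      set L : List (Equiv.Perm (ℂ × ℂ)) := List.ofFn (fun j => H (w j)) with hLdef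
      have hLlen : L.length = k + 1 := by simp [hLdef]
      have hLmem : ∀ σ ∈ L,
          (∀ z ∈ VRp R, σ z ∈ VRp R ∧ 2*‖z.2‖ ≤ ‖(σ z).2‖) ∧
          (∀ z ∈ VRm R, σ⁻¹ z ∈ VRm R ∧ 2*‖z.1‖ ≤ ‖(σ⁻¹ z).1‖) := by
        intro σ hσ
        rw [hLdef, List.mem_ofFn] at hσ
        obtain ⟨j, rfl⟩ := hσ
        exact hgen (w j)
      obtain ⟨hp, hm⟩ := perm_list_est R L hLmem
      have hprod : hseq k = L.prod := hw
      have hkey : (2:ℝ)^k * R < 2^(k+1) * R := by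
        have : (2:ℝ)^k < 2^(k+1) := by
          have := pow_lt_pow_right₀ (one_lt_two (α := ℝ)) (Nat.lt_succ_self k)
          exact this
        nlinarith
      constructor
      · ext z
        simp only [Set.mem_inter_iff, Set.mem_image, Set.mem_empty_iff_false, iff_false]
        rintro ⟨⟨u, hu, rfl⟩, hzV⟩
        obtain ⟨hmem, hest⟩ := hp u hu
        rw [hprod] at *
        have h1 : R ≤ ‖u.2‖ := le_trans (le_max_right _ _) hu
        have h2 : ‖(L.prod u).2‖ ≤ 2^k * R := le_trans (le_max_right _ _) hzV
        have h3 : (2:ℝ)^(k+1) * R ≤ 2^(k+1) * ‖u.2‖ := by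
          have : (0:ℝ) < 2^(k+1) := by positivity
          nlinarith
        rw [hLlen] at hest
        linarith
      · ext z
        simp only [Set.mem_inter_iff, Set.mem_image, Set.mem_empty_iff_false, iff_false]
        rintro ⟨⟨u, hu, rfl⟩, hzV⟩
        obtain ⟨hmem, hest⟩ := hm u hu
        rw [hprod] at *
        have h1 : R ≤ ‖u.1‖ := le_trans (le_max_right _ _) hu
        have h2 : ‖(L.prod⁻¹ u).1‖ ≤ 2^k * R := le_trans (le_max_left _ _) hzV
        rw [hLlen] at hest
        have : (0:ℝ) < 2^(k+1) := by positivity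
        nlinarith
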